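/- Let U, V be finite sets, S ⊆ U × V, g : V → ℝ≥0, and for each edge e = (u,v) ∈ S let μ_e : ℕ → [0,1] be non-decreasing. Define r(b) = Σ_{v ∈ V} g_v (1 - ∏_{e=(u,v) ∈ S} (1 - μ_e(b_u))). Then r is submodular over the integer lattice: r(x ∨ y) + r(x ∧ y) ≤ r(x) + r(y) for all x, y ∈ ℕ^U. -/
import Mathlib

lemma prod_min_max_super {ι : Type*} (s : Finset ι) (p q : ι → ℝ)
    (hp : ∀ i, 0 ≤ p i) (hq : ∀ i, 0 ≤ q i) :
    ∏ i ∈ s, p i + ∏ i ∈ s, q i ≤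
      ∏ i ∈ s, min (p i) (q i) + ∏ i ∈ s, max (p i) (q i) := by
  induction s using Finset.cons_induction with
  | empty => simp
  | cons a s ha ih =>
    simp only [Finset.prod_cons]
    set P := ∏ i ∈ s, p i
    set Q := ∏ i ∈ s, q i
    set m := ∏ i ∈ s, min (p i) (q i)
    set M := ∏ i ∈ s, max (p i) (q i)
    have hmP : m ≤ P := Finset.prod_le_prod (fun i _ => le_min (hp i) (hq i))
      (fun i _ => min_le_left _ _)
    have hmQ : m ≤ Q := Finset.prod_le_prod (fun i _ => le_min (hp i) (hq i))
      (fun i _ => min_le_right _ _)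
    rcases le_total (p a) (q a) with h | h
    · rw [min_eq_left h, max_eq_right h]
      nlinarith [mul_nonneg (sub_nonneg.2 h) (sub_nonneg.2 hmP),
        mul_le_mul_of_nonneg_left ih (hq a)]
    · rw [min_eq_right h, max_eq_left h]
      nlinarith [mul_nonneg (sub_nonneg.2 h) (sub_nonneg.2 hmQ),
        mul_le_mul_of_nonneg_left ih (hp a)]

theorem stmt_7 (U V : Type*) [Fintype U] [Fintype V] [DecidableEq U] [DecidableEq V]
    (S : Finset (U × V)) (g : V → ℝ) (hg : ∀ v, 0 ≤ g v)
    (μ : U × V → ℕ → ℝ) (hμ0 : ∀ e n, 0 ≤ μ e n) (hμ1 : ∀ e n, μ e n ≤ 1)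
    (hmono : ∀ e, Monotone (μ e))
    (r : (U → ℕ) → ℝ)
    (hr : ∀ b, r b = ∑ v, g v * (1 - ∏ e ∈ S.filter (fun e => e.2 = v), (1 - μ e (b e.1))))
    (x y : U → ℕ) :
    r (x ⊔ y) + r (x ⊓ y) ≤ r x + r y := by
  rw [hr, hr, hr, hr, ← Finset.sum_add_distrib, ← Finset.sum_add_distrib]
  apply Finset.sum_le_sum
  intro v _
  set p : U × V → ℝ := fun e => 1 - μ e (x e.1) with hp
  set q : U × V → ℝ := fun e => 1 - μ e (y e.1) with hq
  have hsup : ∀ e : U × V, 1 - μ e ((x ⊔ y) e.1) = min (p e) (q e) := by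
    intro e
    have : (x ⊔ y) e.1 = max (x e.1) (y e.1) := rfl
    rw [this, (hmono e).map_max, min_sub_sub_left]
  have hinf : ∀ e : U × V, 1 - μ e ((x ⊓ y) e.1) = max (p e) (q e) := by
    intro e
    have : (x ⊓ y) e.1 = min (x e.1) (y e.1) := rfl
    rw [this, (hmono e).map_min, max_sub_sub_left]
  simp only [hsup, hinf]
  have key := prod_min_max_super (S.filter (fun e => e.2 = v)) p q
    (fun i => by simp [hp, sub_nonneg, hμ1]) (fun i => by simp [hq, sub_nonneg, hμ1])
  nlinarith [hg v, mul_le_mul_of_nonneg_left key (hg v)]
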